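/- Let m = 0 and M > 0, and let f be a C³ solution of f''' + (1/2)·f·f'' + M·(1 - f') = 0 on [0,∞) with lim_{t→∞} f'(t) = 1. Then f'' cannot vanish at any point t₀ where f' has a strict local extremum; consequently f'' has constant sign, i.e. f is everywhere concave or everywhere convex. -/

import Mathlib

open Filter Set

/-- If `h` has positive derivative `d` at `a`, there are points just to the right
where `h` is bigger. -/
lemma aux_slope_pos (h : ℝ → ℝ) (a d : ℝ) (hd : HasDerivAt h d a) (hdpos : 0 < d)
    (ε : ℝ) (hε : 0 < ε) : ∃ q, a < q ∧ q < a + ε ∧ h a < h q := by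
  have hs := hasDerivAt_iff_tendsto_slope.mp hd
  have h1 : ∀ᶠ x in nhdsWithin a {a}ᶜ, 0 < slope h a x := hs.eventually_const_lt hdpos
  have hmono : nhdsWithin a (Set.Ioi a) ≤ nhdsWithin a {a}ᶜ :=
    nhdsWithin_mono a (fun x hx => ne_of_gt hx)
  have h2 : ∀ᶠ x in nhdsWithin a (Set.Ioi a), 0 < slope h a x := hmono h1
  have h3 : Set.Ioo a (a + ε) ∈ nhdsWithin a (Set.Ioi a) :=
    Ioo_mem_nhdsGT_of_mem ⟨le_refl a, by linarith⟩
  have h4 : ∀ᶠ x in nhdsWithin a (Set.Ioi a),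
      0 < slope h a x ∧ x ∈ Set.Ioo a (a + ε) := h2.and (eventually_of_mem h3 (fun x hx => hx))
  obtain ⟨q, hq1, hq2⟩ := h4.exists
  rw [slope_def_field] at hq1
  refine ⟨q, hq2.1, hq2.2, ?_⟩
  have hqa : 0 < q - a := by simp at hq2; linarith [hq2.1]
  nlinarith [div_mul_cancel₀ (h q - h a) (ne_of_gt hqa), mul_pos hq1 hqa]

lemma aux_slope_neg (h : ℝ → ℝ) (a d : ℝ) (hd : HasDerivAt h d a) (hdneg : d < 0)
    (ε : ℝ) (hε : 0 < ε) : ∃ q, a < q ∧ q < a + ε ∧ h q < h a := by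
  obtain ⟨q, h1, h2, h3⟩ := aux_slope_pos (fun x => -h x) a (-d) hd.neg (by linarith) ε hε
  exact ⟨q, h1, h2, by linarith⟩

/-- If `h` is differentiable with continuous derivative, the derivative vanishes at `t₂`,
and the second derivative at `t₂` is positive, then `h` takes bigger values just right of `t₂`. -/
lemma aux_push_right (h : ℝ → ℝ) (hdiff : Differentiable ℝ h)
    (hdc : Continuous (deriv h)) (t₂ d : ℝ)
    (hd2 : HasDerivAt (deriv h) d t₂) (h0 : deriv h t₂ = 0) (hdpos : 0 < d)
    (ε : ℝ) (hε : 0 < ε) : ∃ u, t₂ < u ∧ u < t₂ + ε ∧ h t₂ < h u := by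
  have hs := hasDerivAt_iff_tendsto_slope.mp hd2
  have h1 : ∀ᶠ x in nhdsWithin t₂ {t₂}ᶜ, 0 < slope (deriv h) t₂ x :=
    hs.eventually_const_lt hdpos
  rw [eventually_nhdsWithin_iff, Metric.eventually_nhds_iff] at h1
  obtain ⟨δ, hδ, hδ'⟩ := h1
  set η := min δ ε with hη
  have hηpos : 0 < η := lt_min hδ hε
  have hder : ∀ x ∈ Set.Ioo t₂ (t₂ + η / 2), 0 < deriv h x := by
    intro x hx
    have hx1 : t₂ < x := hx.1
    have hx2 : x < t₂ + η / 2 := hx.2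
    have hdist : dist x t₂ < δ := by
      rw [Real.dist_eq, abs_of_pos (by linarith)]
      have : η ≤ δ := min_le_left _ _
      linarith
    have := hδ' hdist (by simp; exact ne_of_gt hx1)
    rw [slope_def_field, h0, sub_zero] at this
    nlinarith [div_mul_cancel₀ (deriv h x) (ne_of_gt (by linarith : (0:ℝ) < x - t₂)),
      mul_pos this (by linarith : (0:ℝ) < x - t₂)]
  have hmono : StrictMonoOn h (Set.Icc t₂ (t₂ + η / 2)) := by
    apply strictMonoOn_of_deriv_pos (convex_Icc _ _) (hdiff.continuous.continuousOn)
    intro x hx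
    rw [interior_Icc] at hx
    exact hder x hx
  refine ⟨t₂ + η / 2, by linarith, by have : η ≤ ε := min_le_right _ _; linarith, ?_⟩
  exact hmono ⟨le_refl _, by linarith⟩ ⟨by linarith, le_refl _⟩ (by linarith)

lemma aux_push_right_neg (h : ℝ → ℝ) (hdiff : Differentiable ℝ h)
    (hdc : Continuous (deriv h)) (t₂ d : ℝ)
    (hd2 : HasDerivAt (deriv h) d t₂) (h0 : deriv h t₂ = 0) (hdneg : d < 0)
    (ε : ℝ) (hε : 0 < ε) : ∃ u, t₂ < u ∧ u < t₂ + ε ∧ h u < h t₂ := by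
  have hnd : Differentiable ℝ (fun x => -h x) := hdiff.neg
  have hnderiv : deriv (fun x => -h x) = fun x => -deriv h x := by
    funext x; exact deriv.neg
  have hd2' : HasDerivAt (deriv (fun x => -h x)) (-d) t₂ := by
    rw [hnderiv]; exact hd2.neg
  obtain ⟨u, h1, h2, h3⟩ := aux_push_right (fun x => -h x) hnd
    (by rw [hnderiv]; exact hdc.neg) t₂ (-d) hd2' (by rw [hnderiv]; simp [h0])
    (by linarith) ε hε
  exact ⟨u, h1, h2, by simpa using h3⟩


/-- `u` has a strict local extremum at `t₀`. -/
def StrictLocalExtr (u : ℝ → ℝ) (t₀ : ℝ) : Prop :=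
  (∃ ε > 0, ∀ s : ℝ, s ≠ t₀ → |s - t₀| < ε → u s < u t₀) ∨
  (∃ ε > 0, ∀ s : ℝ, s ≠ t₀ → |s - t₀| < ε → u t₀ < u s)

theorem stmt_8 (M : ℝ) (hM : 0 < M) (f : ℝ → ℝ)
    (hf : ContDiff ℝ 3 f)
    (hode : ∀ t : ℝ, 0 ≤ t →
      deriv (deriv (deriv f)) t + 1 / 2 * f t * deriv (deriv f) t
        + M * (1 - deriv f t) = 0)
    (hlim : Tendsto (deriv f) atTop (nhds 1)) :
    (∀ t₀ : ℝ, 0 ≤ t₀ → StrictLocalExtr (deriv f) t₀ →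
      deriv (deriv f) t₀ ≠ 0) ∧
    ((∀ t : ℝ, 0 ≤ t → deriv (deriv f) t ≤ 0) ∨
     (∀ t : ℝ, 0 ≤ t → 0 ≤ deriv (deriv f) t)) := by
  -- regularity
  have hf2 : ContDiff ℝ 2 (deriv f) := by
    have h3 : ContDiff ℝ (2 + 1) f := by
      have : ((2:WithTop ℕ∞) + 1) = 3 := by norm_num
      rw [this]; exact hf
    exact (contDiff_succ_iff_deriv.mp h3).2.2
  have hf1 : ContDiff ℝ 1 (deriv (deriv f)) := by
    have h3 : ContDiff ℝ (1 + 1) (deriv f) := by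
      have : ((1:WithTop ℕ∞) + 1) = 2 := by norm_num
      rw [this]; exact hf2
    exact (contDiff_succ_iff_deriv.mp h3).2.2
  have hgdiff : Differentiable ℝ (deriv f) := hf2.differentiable (by norm_num)
  have hgc : Continuous (deriv f) := hgdiff.continuous
  have hg'diff : Differentiable ℝ (deriv (deriv f)) := hf1.differentiable one_ne_zero
  have hg'c : Continuous (deriv (deriv f)) := hg'diff.continuous
  have hHD : ∀ t, HasDerivAt (deriv (deriv f)) (deriv (deriv (deriv f)) t) t :=
    fun t => (hg'diff t).hasDerivAt
  have hHD1 : ∀ t, HasDerivAt (deriv f) (deriv (deriv f) t) t :=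
    fun t => (hgdiff t).hasDerivAt
  -- ODE at points where f'' = 0
  have ode0 : ∀ t, 0 ≤ t → deriv (deriv f) t = 0 →
      deriv (deriv (deriv f)) t = M * (deriv f t - 1) := by
    intro t ht h0
    have := hode t ht
    rw [h0] at this; ring_nf at this ⊢; linarith
  -- No interior global max above 1
  have haveMax : ∀ p, 0 ≤ p → ∀ s, p ≤ s → 1 < deriv f s →
      ∀ q, p ≤ q → deriv f p < deriv f q → False := by
    intro p hp s hps hs q hpq hq
    obtain ⟨T₀, hT₀⟩ := eventually_atTop.mp (hlim.eventually_lt_const hs)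
    set T := max T₀ (max s q) with hT
    have hsT : s ≤ T := le_trans (le_max_left _ _) (le_max_right _ _)
    have hqT : q ≤ T := le_trans (le_max_right _ _) (le_max_right _ _)
    have hpT : p ≤ T := le_trans hps hsT
    obtain ⟨t₂, ht₂mem, ht₂max⟩ := (isCompact_Icc (a := p) (b := T)).exists_isMaxOn
      ⟨p, le_refl p, hpT⟩ hgc.continuousOn
    have ht₂s : deriv f s ≤ deriv f t₂ := ht₂max ⟨hps, hsT⟩
    have ht₂q : deriv f q ≤ deriv f t₂ := ht₂max ⟨hpq, hqT⟩
    have hglob : ∀ t, p ≤ t → deriv f t ≤ deriv f t₂ := by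
      intro t hpt
      rcases le_or_gt t T with h | h
      · exact ht₂max ⟨hpt, h⟩
      · have := hT₀ t (le_trans (le_max_left _ _) h.le)
        linarith
    have ht₂p : p < t₂ := by
      rcases lt_or_eq_of_le ht₂mem.1 with h | h
      · exact h
      · exfalso; rw [← h] at ht₂q; linarith
    have hloc : IsLocalMax (deriv f) t₂ := by
      filter_upwards [isOpen_Ioi.mem_nhds ht₂p] with u hu
      exact hglob u (le_of_lt hu)
    have h0 : deriv (deriv f) t₂ = 0 := hloc.deriv_eq_zero
    have hd3 : deriv (deriv (deriv f)) t₂ = M * (deriv f t₂ - 1) :=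
      ode0 t₂ (le_trans hp ht₂mem.1) h0
    have hdpos : 0 < deriv (deriv (deriv f)) t₂ := by
      rw [hd3]; have : 1 < deriv f t₂ := lt_of_lt_of_le hs ht₂s
      nlinarith
    obtain ⟨u, hu1, _, hu3⟩ := aux_push_right (deriv f) hgdiff hg'c t₂ _
      (hHD t₂) h0 hdpos 1 one_pos
    have := hglob u (le_trans ht₂p.le hu1.le)
    linarith
  -- No interior global min below 1
  have haveMin : ∀ p, 0 ≤ p → ∀ s, p ≤ s → deriv f s < 1 →
      ∀ q, p ≤ q → deriv f q < deriv f p → False := by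
    intro p hp s hps hs q hpq hq
    obtain ⟨T₀, hT₀⟩ := eventually_atTop.mp (hlim.eventually_const_lt hs)
    set T := max T₀ (max s q) with hT
    have hsT : s ≤ T := le_trans (le_max_left _ _) (le_max_right _ _)
    have hqT : q ≤ T := le_trans (le_max_right _ _) (le_max_right _ _)
    have hpT : p ≤ T := le_trans hps hsT
    obtain ⟨t₂, ht₂mem, ht₂min⟩ := (isCompact_Icc (a := p) (b := T)).exists_isMinOn
      ⟨p, le_refl p, hpT⟩ hgc.continuousOn
    have ht₂s : deriv f t₂ ≤ deriv f s := ht₂min ⟨hps, hsT⟩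
    have ht₂q : deriv f t₂ ≤ deriv f q := ht₂min ⟨hpq, hqT⟩
    have hglob : ∀ t, p ≤ t → deriv f t₂ ≤ deriv f t := by
      intro t hpt
      rcases le_or_gt t T with h | h
      · exact ht₂min ⟨hpt, h⟩
      · have := hT₀ t (le_trans (le_max_left _ _) h.le)
        linarith
    have ht₂p : p < t₂ := by
      rcases lt_or_eq_of_le ht₂mem.1 with h | h
      · exact h
      · exfalso; rw [← h] at ht₂q; linarith
    have hloc : IsLocalMin (deriv f) t₂ := by
      filter_upwards [isOpen_Ioi.mem_nhds ht₂p] with u hu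
      exact hglob u (le_of_lt hu)
    have h0 : deriv (deriv f) t₂ = 0 := hloc.deriv_eq_zero
    have hd3 : deriv (deriv (deriv f)) t₂ = M * (deriv f t₂ - 1) :=
      ode0 t₂ (le_trans hp ht₂mem.1) h0
    have hdneg : deriv (deriv (deriv f)) t₂ < 0 := by
      rw [hd3]; have : deriv f t₂ < 1 := lt_of_le_of_lt ht₂s hs
      nlinarith
    obtain ⟨u, hu1, _, hu3⟩ := aux_push_right_neg (deriv f) hgdiff hg'c t₂ _
      (hHD t₂) h0 hdneg 1 one_pos
    have := hglob u (le_trans ht₂p.le hu1.le)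
    linarith
  constructor
  · -- Part 1
    intro t₀ ht₀ hextr h0
    rcases hextr with ⟨ε, hε, hmax⟩ | ⟨ε, hε, hmin⟩
    · -- strict local max
      rcases lt_or_ge 1 (deriv f t₀) with h1 | h1
      · have hd3 : deriv (deriv (deriv f)) t₀ = M * (deriv f t₀ - 1) := ode0 t₀ ht₀ h0
        have hdpos : 0 < deriv (deriv (deriv f)) t₀ := by rw [hd3]; nlinarith
        obtain ⟨u, hu1, hu2, hu3⟩ := aux_push_right (deriv f) hgdiff hg'c t₀ _
          (hHD t₀) h0 hdpos ε hε
        have := hmax u (ne_of_gt hu1) (by rw [abs_of_pos (by linarith)]; linarith)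
        linarith
      · -- f'(t₀) ≤ 1 : use global min argument
        have hs := hmax (t₀ + ε / 2) (by intro h; linarith [congrArg id h]; )
          (by rw [abs_of_pos (by linarith)]; linarith)
        exact haveMin t₀ ht₀ (t₀ + ε / 2) (by linarith) (by linarith)
          (t₀ + ε / 2) (by linarith) hs
    · -- strict local min
      rcases lt_or_ge (deriv f t₀) 1 with h1 | h1
      · have hd3 : deriv (deriv (deriv f)) t₀ = M * (deriv f t₀ - 1) := ode0 t₀ ht₀ h0
        have hdneg : deriv (deriv (deriv f)) t₀ < 0 := by rw [hd3]; nlinarith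
        obtain ⟨u, hu1, hu2, hu3⟩ := aux_push_right_neg (deriv f) hgdiff hg'c t₀ _
          (hHD t₀) h0 hdneg ε hε
        have := hmin u (ne_of_gt hu1) (by rw [abs_of_pos (by linarith)]; linarith)
        linarith
      · have hs := hmin (t₀ + ε / 2) (by intro h; linarith [congrArg id h])
          (by rw [abs_of_pos (by linarith)]; linarith)
        exact haveMax t₀ ht₀ (t₀ + ε / 2) (by linarith) (by linarith)
          (t₀ + ε / 2) (by linarith) hs
  · -- Part 2
    by_contra hC
    push_neg at hC
    obtain ⟨⟨a, ha0, hapos⟩, ⟨b, hb0, hbneg⟩⟩ := hC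
    obtain ⟨q, haq, _, hgq⟩ := aux_slope_pos (deriv f) a _ (hHD1 a) hapos 1 one_pos
    obtain ⟨r, hbr, _, hgr⟩ := aux_slope_neg (deriv f) b _ (hHD1 b) hbneg 1 one_pos
    have Hi : ∀ t, a ≤ t → deriv f t ≤ 1 := by
      intro t hat
      by_contra hgt
      exact haveMax a ha0 t hat (lt_of_not_ge hgt) q haq.le hgq
    have Lo : ∀ t, b ≤ t → 1 ≤ deriv f t := by
      intro t hbt
      by_contra hgt
      exact haveMin b hb0 t hbt (lt_of_not_ge hgt) r hbr.le hgr
    rcases le_total a b with hab | hba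
    · have h1 := Hi b hab
      have h2 := Lo r hbr.le
      linarith
    · have h1 := Lo a hba
      have h2 := Hi q haq.le
      linarith
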